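/- The probability p that (a) there exists y ∈ Y with S_i = H_i(y) for all i, and (b) for the lexicographically first such y the value 2D-ORC(x,y) matches the monochromatic color of column y, satisfies p ≥ (|T| / C(n²/A, q/2)^{B+1}) · n^{−0.001q} ≥ 2^{−0.027·q·log n} for sufficiently large n. Consequently, by Markov's inequality, at least a p/2 fraction of x ∈ X succeed with probability at least p/2 over the random pattern. -/

import Mathlib

set_option maxHeartbeats 2000000 in
open Classical Real Finset in
/-- Probability lower bound in Case 2: sampling a uniform hitting pattern `S` from
`Ω` (with `|Ω| = C(m, q/2)^{B+1}`, `m = n²/A`) and an independent uniform `x ∈ X`,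
the probability `p` that `S` is the hitting pattern of some `y ∈ Y` (via the
canonical choice `ypat`) and that `2D-ORC(x,y)` matches the monochromatic color
of column `y` satisfies `p ≥ (|T|/|Ω|)·n^{−0.001q} ≥ 2^{−0.027·q·log n}`.
Consequently, by Markov's inequality, at least a `p/2`-fraction of `x ∈ X`
succeed with probability at least `p/2` over the random pattern. -/
theorem stmt11 :
    ∃ N : ℕ, ∀ n ≥ N, ∀ k q m B : ℕ,
      1 ≤ q → 2 ∣ q → Real.sqrt n ≤ (k : ℝ) → (k : ℝ) ≤ (n : ℝ) →
      (q : ℝ) * (Real.logb 2 n) ^ 999 ≤ (k : ℝ) →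
      (k : ℝ) ≤ (q : ℝ) * (Real.logb 2 n) ^ 1001 →
      (q : ℝ) ≤ (m : ℝ) → (m : ℝ) ≤ (k : ℝ) →
      (B : ℝ) ≤ 1.01 * Real.logb 2 k / (997 * Real.logb 2 (Real.logb 2 n)) →
      ∀ (PT XT YT ZT : Type) [Fintype PT] [Fintype XT]
        (Ω T : Finset PT) (X : Finset XT) (Y : Finset YT)
        (f : XT → YT → ZT) (ypat : PT → YT) (col : YT → ZT),
      X.Nonempty → T ⊆ Ω →
      (Ω.card : ℝ) = (Nat.choose m (q / 2) : ℝ) ^ (B + 1) →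
      ((Nat.choose m (q / 2) : ℝ)) ^ ((0.95 : ℝ) * B) ≤ (T.card : ℝ) →
      (∀ S ∈ T, ypat S ∈ Y) →
      -- the rectangle X × Y is n^{−0.001 q}-column-monochromatic with colors `col`
      (∀ y ∈ Y, (n : ℝ) ^ (-(0.001 : ℝ) * q) * X.card ≤
          ((X.filter (fun x => f x y = col y)).card : ℝ)) →
      ((T.card : ℝ) / Ω.card * (n : ℝ) ^ (-(0.001 : ℝ) * q) ≤
        (((T ×ˢ X).filter
            (fun sx => f sx.2 (ypat sx.1) = col (ypat sx.1))).card : ℝ)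
          / ((Ω.card : ℝ) * X.card))
      ∧ ((2 : ℝ) ^ (-(0.027 : ℝ) * q * Real.logb 2 n) ≤
        (((T ×ˢ X).filter
            (fun sx => f sx.2 (ypat sx.1) = col (ypat sx.1))).card : ℝ)
          / ((Ω.card : ℝ) * X.card))
      ∧ ∃ Xb ⊆ X,
          ((((T ×ˢ X).filter
              (fun sx => f sx.2 (ypat sx.1) = col (ypat sx.1))).card : ℝ)
            / ((Ω.card : ℝ) * X.card)) / 2 * X.card ≤ (Xb.card : ℝ)
          ∧ ∀ x ∈ Xb,
            ((((T ×ˢ X).filter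
                (fun sx => f sx.2 (ypat sx.1) = col (ypat sx.1))).card : ℝ)
              / ((Ω.card : ℝ) * X.card)) / 2 ≤
              ((T.filter (fun S => f x (ypat S) = col (ypat S))).card : ℝ) / Ω.card := by
  refine ⟨2 ^ 2 ^ 50, ?_⟩
  intro n hn k q m B hq1 hq2 hsk hkn hqk1 hqk2 hqm hmk hB
  intro PT XT YT ZT _ _ Ω T X Y f ypat col hX hTΩ hΩc hTc hyY hmono
  -- numeric setup
  have hn2 : ((2:ℝ) ^ (2^50 : ℕ)) ≤ (n:ℝ) := by
    have h := Nat.cast_le (α := ℝ) |>.mpr hn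
    rwa [Nat.cast_pow, Nat.cast_ofNat] at h
  clear hn
  set j := q / 2 with hjdef
  have hqj : q = 2 * j := by omega
  have hj1 : 1 ≤ j := by omega
  have hqm' : q ≤ m := by exact_mod_cast hqm
  have hjm : j ≤ m := by omega
  have hq2j : (q : ℝ) = 2 * (j : ℝ) := by exact_mod_cast congrArg (Nat.cast (R := ℝ)) hqj
  have hjpos : (0:ℝ) < (j:ℝ) := by exact_mod_cast hj1
  have hn1 : (1:ℝ) < (n:ℝ) := lt_of_lt_of_le (one_lt_pow₀ (by norm_num) (by positivity)) hn2
  set L := Real.logb 2 n with hLdef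
  have hL0 : ((2^50 : ℕ) : ℝ) ≤ L := by
    have h1 : Real.logb 2 ((2:ℝ)^(2^50:ℕ)) ≤ L :=
      Real.logb_le_logb_of_le one_lt_two (by positivity) hn2
    rwa [Real.logb_pow, Real.logb_self_eq_one (by norm_num), mul_one] at h1
  clear hn2
  have hL0' : (10:ℝ)^15 ≤ L := le_trans (by norm_num) hL0
  have hLpos : (0:ℝ) < L := by linarith
  set LL := Real.logb 2 L with hLLdef
  have hLL0 : 0 ≤ LL := by
    rw [hLLdef]
    exact Real.logb_nonneg one_lt_two (by linarith : (1:ℝ) ≤ L)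
  have hsqL : Real.sqrt L * Real.sqrt L = L := Real.mul_self_sqrt hLpos.le
  have hsq7 : (10:ℝ)^7 ≤ Real.sqrt L := by
    rw [show ((10:ℝ)^7) = Real.sqrt ((10^7)^2) from (Real.sqrt_sq (by norm_num)).symm]
    refine Real.sqrt_le_sqrt ?_
    norm_num
    linarith
  have hsqpos : (0:ℝ) < Real.sqrt L := lt_of_lt_of_le (by norm_num) hsq7
  have hlog2 : (0.6931:ℝ) < Real.log 2 := by
    have := Real.log_two_gt_d9; linarith
  have hLL29 : LL ≤ 2.9 * Real.sqrt L := by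
    have h2 : Real.log L = 2 * Real.log (Real.sqrt L) := by
      conv_lhs => rw [← hsqL]
      rw [Real.log_mul hsqpos.ne' hsqpos.ne']; ring
    have h3 : Real.log (Real.sqrt L) ≤ Real.sqrt L - 1 :=
      Real.log_le_sub_one_of_pos hsqpos
    have h4 : Real.sqrt L * 0.6931 ≤ Real.sqrt L * Real.log 2 :=
      mul_le_mul_of_nonneg_left hlog2.le hsqpos.le
    rw [hLLdef, Real.logb, div_le_iff₀ (by linarith : (0:ℝ) < Real.log 2)]
    linarith
  have hLLsmall : LL ≤ 0.0000003 * L := by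
    have h9 : (10:ℝ)^7 * Real.sqrt L ≤ L := by
      have := mul_le_mul_of_nonneg_right hsq7 (Real.sqrt_nonneg L)
      linarith
    linarith
  -- binomial coefficient
  set c := ((m.choose j : ℕ) : ℝ) with hcdef
  have hc1 : (1:ℝ) ≤ c := by
    have h : 1 ≤ m.choose j := Nat.choose_pos hjm
    rw [hcdef]; exact_mod_cast h
  have hcpos : (0:ℝ) < c := by linarith
  have hΩpos : (0:ℝ) < (Ω.card : ℝ) := by rw [hΩc]; positivity
  have hXpos : (0:ℝ) < (X.card : ℝ) := by exact_mod_cast Finset.card_pos.mpr hX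
  -- Part 1
  set F := (T ×ˢ X).filter (fun sx => f sx.2 (ypat sx.1) = col (ypat sx.1)) with hFdef
  have hFcard : F.card = ∑ S ∈ T, (X.filter (fun x => f x (ypat S) = col (ypat S))).card := by
    rw [hFdef, Finset.card_filter, Finset.sum_product]
    exact Finset.sum_congr rfl fun S _ => (Finset.card_filter _ _).symm
  have h1 : (T.card:ℝ) * ((n:ℝ) ^ (-(0.001:ℝ)*(q:ℝ)) * (X.card:ℝ)) ≤ (F.card : ℝ) := by
    rw [hFcard]
    push_cast
    calc (T.card:ℝ) * ((n:ℝ) ^ (-(0.001:ℝ)*(q:ℝ)) * (X.card:ℝ))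
        = ∑ _S ∈ T, ((n:ℝ) ^ (-(0.001:ℝ)*(q:ℝ)) * (X.card:ℝ)) := by
          rw [Finset.sum_const, nsmul_eq_mul]
      _ ≤ ∑ S ∈ T, ((X.filter (fun x => f x (ypat S) = col (ypat S))).card : ℝ) :=
          Finset.sum_le_sum fun S hS => hmono (ypat S) (hyY S hS)
  have hpart1 : (T.card:ℝ)/(Ω.card:ℝ) * (n:ℝ)^(-(0.001:ℝ)*(q:ℝ))
      ≤ (F.card:ℝ)/((Ω.card:ℝ)*(X.card:ℝ)) := by
    rw [div_mul_eq_mul_div, div_le_div_iff₀ hΩpos (mul_pos hΩpos hXpos)]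
    have h2 := mul_le_mul_of_nonneg_right h1 hΩpos.le
    linarith [h2]
  have hp0 : 0 ≤ (F.card:ℝ)/((Ω.card:ℝ)*(X.card:ℝ)) := div_nonneg (Nat.cast_nonneg _) (mul_nonneg (Nat.cast_nonneg _) (Nat.cast_nonneg _))
  refine ⟨hpart1, ?_, ?_⟩
  · -- Part 2
    have hΩc' : (Ω.card:ℝ) = c ^ ((B:ℝ) + 1) := by
      rw [hΩc, ← Real.rpow_natCast c (B+1)]; push_cast; ring_nf
    have hratio : c ^ (-(0.05*(B:ℝ)+1)) ≤ (T.card:ℝ)/(Ω.card:ℝ) := by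
      rw [hΩc']
      have e : c ^ (-(0.05*(B:ℝ)+1)) = c ^ ((0.95:ℝ)*(B:ℝ)) / c ^ ((B:ℝ)+1) := by
        rw [← Real.rpow_sub hcpos]; ring_nf
      rw [e]
      exact (div_le_div_iff_of_pos_right (Real.rpow_pos_of_pos hcpos _)).mpr hTc
    -- bound on logb 2 c
    have hexpj : ((j:ℝ))^j / (j.factorial : ℝ) ≤ Real.exp 1 ^ j := by
      rw [Real.exp_one_pow]
      calc ((j:ℝ))^j / (j.factorial : ℝ)
          ≤ ∑ i ∈ Finset.range (j+1), (j:ℝ)^i / (i.factorial : ℝ) := by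
            refine Finset.single_le_sum (f := fun i => (j:ℝ)^i / (i.factorial : ℝ)) ?_
              (Finset.self_mem_range_succ j)
            intro i _; positivity
        _ ≤ Real.exp j := Real.sum_le_exp_of_nonneg (by positivity) _
    have hcle : c ≤ ((m:ℝ)/(j:ℝ) * Real.exp 1)^j := by
      have h1 : c ≤ (m:ℝ)^j / (j.factorial : ℝ) := by
        have := Nat.choose_le_pow_div (α := ℝ) j m
        simpa using this
      have h3 : (m:ℝ)^j / (j.factorial : ℝ)
          = ((m:ℝ)/(j:ℝ))^j * ((j:ℝ)^j / (j.factorial : ℝ)) := by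
        rw [div_pow, div_mul_div_comm, mul_comm ((m:ℝ)^j) _,
          mul_div_mul_left _ _ (by positivity : ((j:ℝ))^j ≠ 0)]
      have h4 : ((m:ℝ)/(j:ℝ))^j * ((j:ℝ)^j / (j.factorial : ℝ))
          ≤ ((m:ℝ)/(j:ℝ))^j * Real.exp 1 ^ j :=
        mul_le_mul_of_nonneg_left hexpj (by positivity)
      calc c ≤ (m:ℝ)^j / (j.factorial : ℝ) := h1
        _ = ((m:ℝ)/(j:ℝ))^j * ((j:ℝ)^j / (j.factorial : ℝ)) := h3
        _ ≤ ((m:ℝ)/(j:ℝ))^j * Real.exp 1 ^ j := h4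
        _ = ((m:ℝ)/(j:ℝ) * Real.exp 1)^j := (mul_pow _ _ _).symm
    have hd : (m:ℝ)/(j:ℝ) * Real.exp 1 ≤ L^1002 := by
      have he3 : Real.exp 1 < 3 := lt_trans Real.exp_one_lt_d9 (by norm_num)
      have hm2 : (m:ℝ) ≤ 2*(j:ℝ)*L^1001 := by
        calc (m:ℝ) ≤ (k:ℝ) := hmk
          _ ≤ (q:ℝ) * L^1001 := hqk2
          _ = 2*(j:ℝ)*L^1001 := by rw [hq2j]
      have hL1001pos : (0:ℝ) < L^1001 := by positivity
      rw [div_mul_eq_mul_div, div_le_iff₀ hjpos]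
      have hL6 : (6:ℝ) ≤ L := by linarith
      have he0 : (0:ℝ) ≤ Real.exp 1 := (Real.exp_pos 1).le
      have e1 : (m:ℝ) * Real.exp 1 ≤ (m:ℝ) * 3 :=
        mul_le_mul_of_nonneg_left he3.le (Nat.cast_nonneg m)
      have e2 : (m:ℝ) * 3 ≤ (2*(j:ℝ)*L^1001) * 3 :=
        mul_le_mul_of_nonneg_right hm2 (by norm_num)
      have e3 : (6:ℝ)*((j:ℝ)*L^1001) ≤ L*((j:ℝ)*L^1001) :=
        mul_le_mul_of_nonneg_right hL6 (by positivity)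
      have e4 : L*((j:ℝ)*L^1001) = L^1002*(j:ℝ) := by ring
      linarith
    have hlogc0 : 0 ≤ Real.logb 2 c := Real.logb_nonneg one_lt_two hc1
    have hlogc : Real.logb 2 c ≤ (j:ℝ) * (1002 * LL) := by
      have hmj0 : (0:ℝ) ≤ (m:ℝ)/(j:ℝ) * Real.exp 1 := by positivity
      have hc2 : c ≤ (L^1002)^j :=
        le_trans hcle (pow_le_pow_left₀ hmj0 hd j)
      calc Real.logb 2 c ≤ Real.logb 2 ((L^1002)^j) :=
            Real.logb_le_logb_of_le one_lt_two hcpos hc2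
        _ = (j:ℝ) * (1002 * LL) := by
            rw [Real.logb_pow, Real.logb_pow, ← hLLdef]
            push_cast
            ring
    -- bound on B * LL
    have hkpos : (0:ℝ) < (k:ℝ) := by
      have hn0 : (0:ℝ) < (n:ℝ) := by linarith
      exact lt_of_lt_of_le (Real.sqrt_pos.mpr hn0) hsk
    have hlogk : Real.logb 2 k ≤ L := Real.logb_le_logb_of_le one_lt_two hkpos hkn
    have hLLpos : (0:ℝ) < LL := by
      rw [hLLdef]
      exact Real.logb_pos one_lt_two (by linarith : (1:ℝ) < L)
    have hBLL : (B:ℝ) * LL ≤ 1.01 * L / 997 := by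
      have h5 : (B:ℝ) * (997 * LL) ≤ 1.01 * Real.logb 2 k :=
        (le_div_iff₀ (mul_pos (by norm_num) hLLpos)).mp hB
      linarith
    have hB0 : (0:ℝ) ≤ (B:ℝ) := Nat.cast_nonneg B
    -- key exponent inequality
    have hkey : (0.05*(B:ℝ)+1) * Real.logb 2 c ≤ (j:ℝ) * (0.052 * L) := by
      have h6 : (0.05*(B:ℝ)+1) * Real.logb 2 c ≤ (0.05*(B:ℝ)+1) * ((j:ℝ) * (1002 * LL)) :=
        mul_le_mul_of_nonneg_left hlogc (by linarith)
      have k1 : (B:ℝ) * LL * (j:ℝ) ≤ 1.01 * L / 997 * (j:ℝ) :=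
        mul_le_mul_of_nonneg_right hBLL hjpos.le
      have k2 : LL * (j:ℝ) ≤ 0.0000003 * L * (j:ℝ) :=
        mul_le_mul_of_nonneg_right hLLsmall hjpos.le
      have k3 : (0:ℝ) ≤ L * (j:ℝ) := mul_nonneg hLpos.le hjpos.le
      linarith
    have hexpineq : -(0.027:ℝ)*(q:ℝ)*L ≤
        Real.logb 2 c * (-(0.05*(B:ℝ)+1)) + L * (-(0.001:ℝ)*(q:ℝ)) := by
      have k3 : (0:ℝ) ≤ L * (j:ℝ) := mul_nonneg hLpos.le hjpos.le
      rw [hq2j]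
      linarith
    have hcn : (2:ℝ)^(-(0.027:ℝ)*(q:ℝ)*L) ≤
        c ^ (-(0.05*(B:ℝ)+1)) * (n:ℝ)^(-(0.001:ℝ)*(q:ℝ)) := by
      have e1 : c ^ (-(0.05*(B:ℝ)+1)) = (2:ℝ) ^ (Real.logb 2 c * (-(0.05*(B:ℝ)+1))) := by
        rw [Real.rpow_mul (by norm_num), Real.rpow_logb (by norm_num) (by norm_num) hcpos]
      have e2 : (n:ℝ) ^ (-(0.001:ℝ)*(q:ℝ)) = (2:ℝ) ^ (L * (-(0.001:ℝ)*(q:ℝ))) := by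
        rw [Real.rpow_mul (by norm_num : (0:ℝ) ≤ 2) L (-(0.001:ℝ)*(q:ℝ)), hLdef,
          Real.rpow_logb (by norm_num) (by norm_num) (by positivity : (0:ℝ) < (n:ℝ))]
      rw [e1, e2, ← Real.rpow_add (by norm_num)]
      exact (Real.rpow_le_rpow_left_iff (by norm_num : (1:ℝ) < 2)).mpr hexpineq
    calc (2:ℝ)^(-(0.027:ℝ)*(q:ℝ)*L)
        ≤ c ^ (-(0.05*(B:ℝ)+1)) * (n:ℝ)^(-(0.001:ℝ)*(q:ℝ)) := hcn
      _ ≤ (T.card:ℝ)/(Ω.card:ℝ) * (n:ℝ)^(-(0.001:ℝ)*(q:ℝ)) :=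
          mul_le_mul_of_nonneg_right hratio (Real.rpow_nonneg (Nat.cast_nonneg n) _)
      _ ≤ (F.card:ℝ)/((Ω.card:ℝ)*(X.card:ℝ)) := hpart1
  · -- Part 3: Markov
    set p := (F.card:ℝ)/((Ω.card:ℝ)*(X.card:ℝ)) with hpdef
    set g := fun x => (T.filter (fun S => f x (ypat S) = col (ypat S))).card with hgdef
    refine ⟨X.filter (fun x => p/2 ≤ (g x : ℝ)/(Ω.card:ℝ)), Finset.filter_subset _ _, ?_, ?_⟩
    · -- Markov count bound
      have hFg : F.card = ∑ x ∈ X, g x := by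
        rw [hFdef, Finset.card_filter, Finset.sum_product_right]
        exact Finset.sum_congr rfl fun x _ => (Finset.card_filter _ _).symm
      have hFg' : (F.card:ℝ) = ∑ x ∈ X, (g x : ℝ) := by rw [hFg]; push_cast; rfl
      have hgle : ∀ x, (g x : ℝ) ≤ (Ω.card:ℝ) := by
        intro x
        have : (T.filter (fun S => f x (ypat S) = col (ypat S))).card ≤ Ω.card :=
          le_trans (Finset.card_filter_le _ _) (Finset.card_le_card hTΩ)
        exact_mod_cast this
      set Xb := X.filter (fun x => p/2 ≤ (g x : ℝ)/(Ω.card:ℝ)) with hXbdef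
      have hsplit : ∑ x ∈ X, (g x : ℝ) =
          ∑ x ∈ Xb, (g x : ℝ) + ∑ x ∈ X.filter (fun x => ¬ (p/2 ≤ (g x : ℝ)/(Ω.card:ℝ))), (g x : ℝ) := by
        rw [hXbdef]
        exact (Finset.sum_filter_add_sum_filter_not X _ _).symm
      have hb1 : ∑ x ∈ Xb, (g x : ℝ) ≤ (Xb.card:ℝ) * (Ω.card:ℝ) := by
        calc ∑ x ∈ Xb, (g x : ℝ) ≤ ∑ _x ∈ Xb, (Ω.card:ℝ) :=
              Finset.sum_le_sum fun x _ => hgle x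
          _ = (Xb.card:ℝ) * (Ω.card:ℝ) := by rw [Finset.sum_const, nsmul_eq_mul]
      have hb2 : ∑ x ∈ X.filter (fun x => ¬ (p/2 ≤ (g x : ℝ)/(Ω.card:ℝ))), (g x : ℝ)
          ≤ (X.card:ℝ) * (p/2 * (Ω.card:ℝ)) := by
        calc ∑ x ∈ X.filter (fun x => ¬ (p/2 ≤ (g x : ℝ)/(Ω.card:ℝ))), (g x : ℝ)
            ≤ ∑ _x ∈ X.filter (fun x => ¬ (p/2 ≤ (g x : ℝ)/(Ω.card:ℝ))), (p/2 * (Ω.card:ℝ)) := by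
              refine Finset.sum_le_sum fun x hx => ?_
              have hx' := (Finset.mem_filter.mp hx).2
              have : (g x : ℝ)/(Ω.card:ℝ) < p/2 := lt_of_not_ge hx'
              calc (g x : ℝ) = (g x : ℝ)/(Ω.card:ℝ) * (Ω.card:ℝ) := (div_mul_cancel₀ _ hΩpos.ne').symm
                _ ≤ p/2 * (Ω.card:ℝ) := mul_le_mul_of_nonneg_right this.le hΩpos.le
          _ = ((X.filter (fun x => ¬ (p/2 ≤ (g x : ℝ)/(Ω.card:ℝ)))).card : ℝ) * (p/2 * (Ω.card:ℝ)) := by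
              rw [Finset.sum_const, nsmul_eq_mul]
          _ ≤ (X.card:ℝ) * (p/2 * (Ω.card:ℝ)) := by
              have hcard : ((X.filter (fun x => ¬ (p/2 ≤ (g x : ℝ)/(Ω.card:ℝ)))).card : ℝ)
                  ≤ (X.card:ℝ) := by exact_mod_cast Finset.card_le_card (Finset.filter_subset _ _)
              have hp2 : 0 ≤ p/2 * (Ω.card:ℝ) := mul_nonneg (div_nonneg hp0 (by norm_num)) hΩpos.le
              exact mul_le_mul_of_nonneg_right hcard hp2
      have hpF : p * ((Ω.card:ℝ) * (X.card:ℝ)) = (F.card:ℝ) := by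
        rw [hpdef]; exact div_mul_cancel₀ _ (mul_pos hΩpos hXpos).ne'
      have hfinal : p * ((Ω.card:ℝ) * (X.card:ℝ)) ≤
          (Xb.card:ℝ) * (Ω.card:ℝ) + (X.card:ℝ) * (p/2 * (Ω.card:ℝ)) := by
        rw [hpF, hFg', hsplit]; linarith
      rw [hpdef] at hfinal ⊢
      nlinarith [hΩpos, hXpos]
    · intro x hx
      exact (Finset.mem_filter.mp hx).2
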